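/- Let X : [0,∞) → [0,∞) be C¹ and satisfy the differential inequality X'(t) + A X(t)^{1+γ/l} ≤ B X(t) for all t > 0, where A, B > 0 and γ, l > 0. Then for all t > 0, X(t) ≤ ( 8B / (A (1 − e^{−B t γ / l})) )^{l/γ}. In particular X(t) is bounded for t ≥ t₀ > 0 by a constant depending only on A, B, γ, l, t₀ and not on X(0). -/

import Mathlib

open Set Filter Topology

/-- Core comparison lemma: while `X^κ` stays above `2B/A`, the quantity `X^(-κ)`
grows at least linearly with slope `A*κ/2`. -/
lemma stmt_10_core (X : ℝ → ℝ) (A B κ : ℝ)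
    (hA : 0 < A) (hB : 0 < B) (hκ : 0 < κ)
    (hXnn : ∀ t, 0 ≤ t → 0 ≤ X t)
    (hC1 : ContDiffOn ℝ 1 X (Set.Ici (0:ℝ)))
    (hineq : ∀ t, 0 < t → deriv X t + A * X t ^ (1 + κ) ≤ B * X t)
    (a t : ℝ) (ha : 0 ≤ a) (hat : a < t)
    (hyp : ∀ s ∈ Icc a t, 2 * B / A ≤ X s ^ κ) :
    X a ^ (-κ) + A * κ / 2 * (t - a) ≤ X t ^ (-κ) := by
  have hBA : (0:ℝ) < 2 * B / A := by positivity
  have hsub : Icc a t ⊆ Ici (0:ℝ) := fun s hs => le_trans ha hs.1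
  have hpos : ∀ s ∈ Icc a t, 0 < X s := by
    intro s hs
    rcases lt_or_eq_of_le (hXnn s (hsub hs)) with h | h
    · exact h
    · exfalso
      have := hyp s hs
      rw [← h, Real.zero_rpow hκ.ne'] at this
      linarith
  have hdX : ∀ s : ℝ, 0 < s → DifferentiableAt ℝ X s := fun s hs =>
    ((hC1.differentiableOn one_ne_zero) s (le_of_lt hs)).differentiableAt (Ici_mem_nhds hs)
  set h : ℝ → ℝ := fun s => X s ^ (-κ) - A * κ / 2 * s with hh
  have hXc : ContinuousOn X (Icc a t) := hC1.continuousOn.mono hsub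
  have hcont : ContinuousOn h (Icc a t) := by
    apply ContinuousOn.sub
    · exact hXc.rpow_const fun s hs => Or.inl (hpos s hs).ne'
    · exact (continuous_const.mul continuous_id).continuousOn
  have hderiv : ∀ s ∈ Ioo a t, HasDerivAt h
      (-κ * X s ^ (-κ - 1) * deriv X s - A * κ / 2) s := by
    intro s hs
    have hs0 : 0 < s := lt_of_le_of_lt ha hs.1
    have hXs : HasDerivAt X (deriv X s) s := (hdX s hs0).hasDerivAt
    have hXspos : 0 < X s := hpos s ⟨le_of_lt hs.1, le_of_lt hs.2⟩
    have hr : HasDerivAt (fun x : ℝ => x ^ (-κ)) (-κ * X s ^ (-κ - 1)) (X s) :=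
      Real.hasDerivAt_rpow_const (Or.inl hXspos.ne')
    have hcomp : HasDerivAt (fun u => X u ^ (-κ)) (-κ * X s ^ (-κ - 1) * deriv X s) s :=
      hr.comp s hXs
    have hlin : HasDerivAt (fun x : ℝ => A * κ / 2 * x) (A * κ / 2) s := by
      simpa using (hasDerivAt_id s).const_mul (A * κ / 2)
    exact hcomp.sub hlin
  have hdnn : ∀ s ∈ Ioo a t, 0 ≤ -κ * X s ^ (-κ - 1) * deriv X s - A * κ / 2 := by
    intro s hs
    have hs0 : 0 < s := lt_of_le_of_lt ha hs.1
    have hsm : s ∈ Icc a t := ⟨le_of_lt hs.1, le_of_lt hs.2⟩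
    have hXspos : 0 < X s := hpos s hsm
    have hsplit : X s ^ (1 + κ) = X s * X s ^ κ := by
      rw [Real.rpow_add hXspos, Real.rpow_one]
    have hXk : 2 * B / A ≤ X s ^ κ := hyp s hsm
    have hBX : B * X s ≤ A / 2 * X s ^ (1 + κ) := by
      rw [hsplit]
      have h1 : 2 * B / A * X s ≤ X s ^ κ * X s :=
        mul_le_mul_of_nonneg_right hXk hXspos.le
      calc B * X s = A / 2 * (2 * B / A * X s) := by field_simp
        _ ≤ A / 2 * (X s ^ κ * X s) := by
            exact mul_le_mul_of_nonneg_left h1 (by positivity)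
        _ = A / 2 * (X s * X s ^ κ) := by ring
    have hX' : deriv X s ≤ -(A / 2) * X s ^ (1 + κ) := by
      have := hineq s hs0
      linarith
    have hprod : X s ^ (-κ - 1) * X s ^ (1 + κ) = 1 := by
      rw [← Real.rpow_add hXspos]
      rw [show -κ - 1 + (1 + κ) = 0 by ring, Real.rpow_zero]
    have hp : 0 < X s ^ (-κ - 1) := Real.rpow_pos_of_pos hXspos _
    have h2 : κ * (X s ^ (-κ - 1) * deriv X s) ≤
        κ * (X s ^ (-κ - 1) * (-(A / 2) * X s ^ (1 + κ))) := by
      apply mul_le_mul_of_nonneg_left _ hκ.le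
      exact mul_le_mul_of_nonneg_left hX' hp.le
    have h3 : κ * (X s ^ (-κ - 1) * (-(A / 2) * X s ^ (1 + κ))) = -(A * κ / 2) := by
      rw [show X s ^ (-κ - 1) * (-(A / 2) * X s ^ (1 + κ))
          = -(A / 2) * (X s ^ (-κ - 1) * X s ^ (1 + κ)) from by ring, hprod]
      ring
    nlinarith [h2, h3]
  have hmono : MonotoneOn h (Icc a t) := by
    apply monotoneOn_of_deriv_nonneg (convex_Icc a t) hcont
    · intro s hs
      rw [interior_Icc] at hs
      exact ((hderiv s hs).differentiableAt).differentiableWithinAt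
    · intro s hs
      rw [interior_Icc] at hs
      rw [(hderiv s hs).deriv]
      exact hdnn s hs
  have := hmono (left_mem_Icc.2 hat.le) (right_mem_Icc.2 hat.le) hat.le
  simp only [hh] at this
  linarith

theorem stmt_10 (X : ℝ → ℝ) (A B γ l : ℝ)
    (hA : 0 < A) (hB : 0 < B) (hγ : 0 < γ) (hl : 0 < l)
    (hXnn : ∀ t, 0 ≤ t → 0 ≤ X t)
    (hC1 : ContDiffOn ℝ 1 X (Set.Ici (0:ℝ)))
    (hineq : ∀ t, 0 < t → deriv X t + A * X t ^ (1 + γ / l) ≤ B * X t) :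
    ∀ t, 0 < t → X t ≤ (8 * B / (A * (1 - Real.exp (-B * t * γ / l)))) ^ (l / γ) := by
  set κ := γ / l with hκdef
  have hκ : 0 < κ := div_pos hγ hl
  intro t ht
  -- Step 1: the key bound  X t ^ κ ≤ 2B/A + 2/(A κ t)
  have key : X t ^ κ ≤ 2 * B / A + 2 / (A * κ * t) := by
    by_cases h1 : X t ^ κ ≤ 2 * B / A
    · have : (0:ℝ) < 2 / (A * κ * t) := by positivity
      linarith
    · push_neg at h1
      -- show X never dipped below the threshold on [0, t]
      have hyp : ∀ s ∈ Set.Icc (0:ℝ) t, 2 * B / A ≤ X s ^ κ := by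
        by_contra hcon
        push_neg at hcon
        obtain ⟨s₀, hs₀m, hs₀⟩ := hcon
        set T : Set ℝ := Set.Icc (0:ℝ) t ∩ (fun s => X s ^ κ) ⁻¹' Set.Iic (2 * B / A) with hT
        have hfc : ContinuousOn (fun s => X s ^ κ) (Set.Icc 0 t) := by
          apply ContinuousOn.rpow_const
          · exact hC1.continuousOn.mono (fun s hs => hs.1)
          · intro s hs; exact Or.inr hκ.le
        have hTclosed : IsClosed T :=
          hfc.preimage_isClosed_of_isClosed isClosed_Icc isClosed_Iic
        have hTne : T.Nonempty := ⟨s₀, hs₀m, le_of_lt hs₀⟩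
        have hTbdd : BddAbove T := ⟨t, fun s hs => hs.1.2⟩
        set c := sSup T with hc
        have hcT : c ∈ T := hTclosed.csSup_mem hTne hTbdd
        have hct : c < t := by
          rcases lt_or_eq_of_le hcT.1.2 with h | h
          · exact h
          · exfalso; have := hcT.2; rw [h] at this
            exact absurd this (not_le.2 h1)
        -- strictly above threshold on (c, t]
        have habove : ∀ s ∈ Set.Ioc c t, 2 * B / A < X s ^ κ := by
          intro s hs
          by_contra hle
          push_neg at hle
          have hsT : s ∈ T := ⟨⟨le_trans hcT.1.1 hs.1.le, hs.2⟩, hle⟩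
          exact absurd (le_csSup hTbdd hsT) (not_le.2 hs.1)
        -- continuity from the right forces X c ^ κ = 2B/A
        have hceq : 2 * B / A ≤ X c ^ κ := by
          have hcw : ContinuousWithinAt (fun s => X s ^ κ) (Set.Ioc c t) c := by
            apply (hfc c hcT.1).mono
            intro s hs
            exact ⟨le_trans hcT.1.1 hs.1.le, hs.2⟩
          have hne : (𝓝[Set.Ioc c t] c).NeBot := by
            apply mem_closure_iff_nhdsWithin_neBot.1
            rw [closure_Ioc hct.ne]
            exact Set.left_mem_Icc.2 hct.le
          exact ge_of_tendsto hcw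
            (eventually_mem_nhdsWithin.mono fun s hs => (habove s hs).le)
        have hhyp2 : ∀ s ∈ Set.Icc c t, 2 * B / A ≤ X s ^ κ := by
          intro s hs
          rcases eq_or_lt_of_le hs.1 with h | h
          · rw [← h]; exact hceq
          · exact (habove s ⟨h, hs.2⟩).le
        have hcore := stmt_10_core X A B κ hA hB hκ hXnn hC1
          (by simpa [hκdef] using hineq) c t hcT.1.1 hct hhyp2
        -- derive contradiction
        have hXc : X c ^ κ = 2 * B / A := le_antisymm hcT.2 hceq
        have hXcpos : 0 < X c := by
          rcases lt_or_eq_of_le (hXnn c hcT.1.1) with h | h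
          · exact h
          · exfalso
            rw [← h, Real.zero_rpow hκ.ne'] at hXc
            have : (0:ℝ) < 2 * B / A := by positivity
            linarith
        have hXtpos : 0 < X t := by
          rcases lt_or_eq_of_le (hXnn t ht.le) with h | h
          · exact h
          · exfalso
            rw [← h, Real.zero_rpow hκ.ne'] at h1
            have : (0:ℝ) < 2 * B / A := by positivity
            linarith
        rw [Real.rpow_neg hXcpos.le, Real.rpow_neg hXtpos.le, hXc] at hcore
        have h4 : (0:ℝ) < 2 * B / A := by positivity
        have hXtk : 0 < X t ^ κ := Real.rpow_pos_of_pos hXtpos κ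
        have h2 : (2 * B / A)⁻¹ < (X t ^ κ)⁻¹ := by
          have : (0:ℝ) < A * κ / 2 * (t - c) := by
            have := sub_pos.2 hct; positivity
          linarith
        exact absurd ((inv_lt_inv₀ h4 hXtk).1 h2) (not_lt.2 h1.le)
      -- apply the core lemma on [0, t]
      have hcore := stmt_10_core X A B κ hA hB hκ hXnn hC1
        (by simpa [hκdef] using hineq) 0 t le_rfl ht hyp
      have hXtpos : 0 < X t := by
        rcases lt_or_eq_of_le (hXnn t ht.le) with h | h
        · exact h
        · exfalso
          rw [← h, Real.zero_rpow hκ.ne'] at h1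
          have : (0:ℝ) < 2 * B / A := by positivity
          linarith
      have hX0 : 0 ≤ X 0 ^ (-κ) := Real.rpow_nonneg (hXnn 0 le_rfl) _
      rw [Real.rpow_neg hXtpos.le] at hcore
      have h5 : A * κ / 2 * t ≤ (X t ^ κ)⁻¹ := by linarith
      have h6 : 0 < X t ^ κ := Real.rpow_pos_of_pos hXtpos _
      have h7 : X t ^ κ ≤ (A * κ / 2 * t)⁻¹ := by
        rw [← inv_inv (X t ^ κ)]
        exact inv_anti₀ (by positivity) h5
      have h8 : (A * κ / 2 * t)⁻¹ = 2 / (A * κ * t) := by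
        field_simp
      rw [h8] at h7
      have : (0:ℝ) < 2 * B / A := by positivity
      linarith
  -- Step 2: compare 2B/A + 2/(Aκt) with the target base
  set u := 1 - Real.exp (-B * t * γ / l) with hu
  have hexp : -B * t * γ / l = -(B * t * κ) := by rw [hκdef]; ring
  have hupos : 0 < u := by
    rw [hu, sub_pos, hexp]
    have : (0:ℝ) < B * t * κ := by positivity
    calc Real.exp (-(B * t * κ)) < Real.exp 0 := Real.exp_lt_exp.2 (by linarith)
      _ = 1 := Real.exp_zero
  have hu1 : u ≤ 1 := by
    rw [hu]
    have := Real.exp_pos (-B * t * γ / l)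
    linarith
  have hus : u ≤ B * t * κ := by
    rw [hu, hexp]
    have := Real.add_one_le_exp (-(B * t * κ))
    linarith
  have hbase : 2 * B / A + 2 / (A * κ * t) ≤ 8 * B / (A * u) := by
    rw [div_add_div _ _ (by positivity : (A:ℝ) ≠ 0) (by positivity : A * κ * t ≠ 0),
      div_le_div_iff₀ (by positivity) (by positivity)]
    nlinarith [mul_pos hA hupos, mul_pos (mul_pos hB ht) hκ, sq_nonneg A,
      mul_le_mul_of_nonneg_left hus (by positivity : (0:ℝ) ≤ 2 * A * A * κ * t),
      mul_le_mul_of_nonneg_left hu1 (by positivity : (0:ℝ) ≤ 2 * A * A * B * κ * t * (κ * t))]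
  -- Step 3: conclude via monotonicity of rpow
  have hXk : X t ^ κ ≤ 8 * B / (A * u) := le_trans key hbase
  have hlγ : l / γ = κ⁻¹ := by rw [hκdef, inv_div]
  rw [hlγ]
  calc X t = (X t ^ κ) ^ κ⁻¹ := by
        rw [← Real.rpow_mul (hXnn t ht.le), mul_inv_cancel₀ hκ.ne', Real.rpow_one]
    _ ≤ (8 * B / (A * u)) ^ κ⁻¹ :=
        Real.rpow_le_rpow (Real.rpow_nonneg (hXnn t ht.le) _) hXk (by positivity)
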